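/- Let a, λ, c, ℏ > 0 and suppose ψ : ℝ → ℂ is C², satisfies π(ψ + (ℏ²/c²)ψ'') = iλψ on [-a, a], and ψ(±a) = 0. Then ψ vanishes identically on [-a, a]. -/

import Mathlib

open Set Complex

theorem stmt_12 (a lam c ℏ : ℝ) (ha : 0 < a) (hlam : 0 < lam) (hc : 0 < c) (hℏ : 0 < ℏ)
    (ψ ψ' ψ'' : ℝ → ℂ)
    (hψ1 : ∀ v ∈ Set.Icc (-a) a, HasDerivWithinAt ψ (ψ' v) (Set.Icc (-a) a) v)
    (hψ2 : ∀ v ∈ Set.Icc (-a) a, HasDerivWithinAt ψ' (ψ'' v) (Set.Icc (-a) a) v)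
    (hψ3 : ContinuousOn ψ'' (Set.Icc (-a) a))
    (heq : ∀ v ∈ Set.Icc (-a) a,
      (Real.pi : ℂ) * (ψ v + ((ℏ ^ 2 / c ^ 2 : ℝ) : ℂ) * ψ'' v)
        = Complex.I * (lam : ℂ) * ψ v)
    (hb1 : ψ (-a) = 0) (hb2 : ψ a = 0) :
    ∀ v ∈ Set.Icc (-a) a, ψ v = 0 := by
  set r : ℝ := ℏ ^ 2 / c ^ 2 with hrdef
  have hr : 0 < r := by positivity
  have hπ : (0:ℝ) < Real.pi := Real.pi_pos
  set k : ℂ := (Complex.I * (lam : ℂ) - (Real.pi : ℂ)) / ((Real.pi * r : ℝ) : ℂ) with hkdef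
  have hπr : (Real.pi * r : ℝ) ≠ 0 := by positivity
  have hkim : k.im = lam / (Real.pi * r) := by
    rw [hkdef, Complex.div_ofReal_im]
    simp
  have hkim0 : k.im ≠ 0 := by
    rw [hkim]; positivity
  have hk0 : k ≠ 0 := fun h => hkim0 (by rw [h]; simp)
  -- ψ'' = k ψ on Icc
  have hode : ∀ v ∈ Set.Icc (-a) a, ψ'' v = k * ψ v := by
    intro v hv
    have h := heq v hv
    have hπc : ((Real.pi : ℝ) : ℂ) ≠ 0 := by exact_mod_cast hπ.ne'
    have hrc : ((r : ℝ) : ℂ) ≠ 0 := by exact_mod_cast hr.ne'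
    have hπrc : ((Real.pi * r : ℝ) : ℂ) ≠ 0 := by exact_mod_cast hπr
    rw [hkdef, div_mul_eq_mul_div, eq_div_iff hπrc]
    push_cast
    linear_combination h
  -- square root of k
  set μ : ℂ := k ^ (((2:ℕ) : ℂ))⁻¹ with hμdef
  have hμ2 : μ ^ 2 = k := Complex.cpow_nat_inv_pow k two_ne_zero
  have hμ0 : μ ≠ 0 := by
    intro h
    apply hk0; rw [← hμ2, h]; ring
  set d : ℂ := ψ' (-a) with hddef
  set φ : ℝ → ℂ := fun t => d / μ * Complex.sinh (μ * ((t : ℂ) + (a : ℂ))) with hφdef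
  set φ' : ℝ → ℂ := fun t => d * Complex.cosh (μ * ((t : ℂ) + (a : ℂ))) with hφ'def
  -- derivatives of φ
  have hlin : ∀ t : ℝ, HasDerivAt (fun s : ℝ => μ * ((s : ℂ) + (a : ℂ))) μ t := by
    intro t
    have : HasDerivAt (fun z : ℂ => μ * (z + (a:ℂ))) (μ * 1) (t : ℂ) :=
      ((hasDerivAt_id _).add_const _).const_mul μ
    simpa using this.comp_ofReal
  have hφd : ∀ t : ℝ, HasDerivAt φ (φ' t) t := by
    intro t
    have h1 : HasDerivAt (fun s : ℝ => Complex.sinh (μ * ((s:ℂ) + (a:ℂ))))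
        (Complex.cosh (μ * ((t:ℂ) + (a:ℂ))) * μ) t :=
      (Complex.hasDerivAt_sinh _).comp t (hlin t)
    have := h1.const_mul (d / μ)
    refine this.congr_deriv ?_
    rw [hφ'def]
    field_simp
  have hφ'd : ∀ t : ℝ, HasDerivAt φ' (k * φ t) t := by
    intro t
    have h1 : HasDerivAt (fun s : ℝ => Complex.cosh (μ * ((s:ℂ) + (a:ℂ))))
        (Complex.sinh (μ * ((t:ℂ) + (a:ℂ))) * μ) t :=
      (Complex.hasDerivAt_cosh _).comp t (hlin t)
    have := h1.const_mul d
    refine this.congr_deriv ?_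
    rw [hφdef, ← hμ2]
    field_simp
  -- Lipschitz vector field
  set V : ℝ → ℂ × ℂ → ℂ × ℂ := fun _ p => (p.2, k * p.1) with hVdef
  have hVlip : ∀ t, LipschitzWith (1 + ‖k‖₊) (V t) := by
    intro t
    apply LipschitzWith.of_dist_le_mul
    intro p q
    rw [Prod.dist_eq, Prod.dist_eq]
    simp only [hVdef, dist_eq_norm]
    have h1 : ‖k * p.1 - k * q.1‖ = ‖k‖ * ‖p.1 - q.1‖ := by
      rw [← mul_sub, norm_mul]
    push_cast
    rw [h1]
    have h2 : (0:ℝ) ≤ ‖p.1 - q.1‖ := norm_nonneg _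
    have h3 : (0:ℝ) ≤ ‖p.2 - q.2‖ := norm_nonneg _
    have h4 : (0:ℝ) ≤ ‖k‖ := norm_nonneg _
    have hm1 : ‖p.1 - q.1‖ ≤ max ‖p.1 - q.1‖ ‖p.2 - q.2‖ := le_max_left _ _
    have hm2 : ‖p.2 - q.2‖ ≤ max ‖p.1 - q.1‖ ‖p.2 - q.2‖ := le_max_right _ _
    have hm0 : (0:ℝ) ≤ max ‖p.1 - q.1‖ ‖p.2 - q.2‖ := le_trans h2 hm1
    apply max_le
    · nlinarith
    · nlinarith
  -- the two solutions
  set f : ℝ → ℂ × ℂ := fun t => (ψ t, ψ' t) with hfdef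
  set g : ℝ → ℂ × ℂ := fun t => (φ t, φ' t) with hgdef
  have hmem : ∀ t ∈ Ico (-a) a, Set.Icc (-a) a ∈ nhdsWithin t (Set.Ici t) :=
    fun t ht => Icc_mem_nhdsGE_of_mem ht
  have hfc : ContinuousOn f (Set.Icc (-a) a) :=
    ContinuousOn.prodMk (fun t ht => (hψ1 t ht).continuousWithinAt)
      (fun t ht => (hψ2 t ht).continuousWithinAt)
  have hfd : ∀ t ∈ Ico (-a) a, HasDerivWithinAt f (V t (f t)) (Set.Ici t) t := by
    intro t ht
    have ht' : t ∈ Set.Icc (-a) a := Ico_subset_Icc_self ht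
    have h1 := ((hψ1 t ht').prodMk (hψ2 t ht')).mono_of_mem_nhdsWithin (hmem t ht)
    have : (ψ' t, ψ'' t) = V t (f t) := Prod.ext rfl (hode t ht')
    rwa [this] at h1
  have hgc : ContinuousOn g (Set.Icc (-a) a) := by
    apply ContinuousOn.prodMk <;> intro t ht
    · exact ((hφd t).continuousAt).continuousWithinAt
    · exact ((hφ'd t).continuousAt).continuousWithinAt
  have hgd : ∀ t ∈ Ico (-a) a, HasDerivWithinAt g (V t (g t)) (Set.Ici t) t := by
    intro t ht
    exact (((hφd t).prodMk (hφ'd t)).hasDerivWithinAt)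
  have hinit : f (-a) = g (-a) := by
    simp only [hfdef, hgdef, hφdef, hφ'def, Prod.mk.injEq]
    have : μ * (((-a : ℝ) : ℂ) + (a : ℂ)) = 0 := by push_cast; ring
    rw [this, Complex.sinh_zero, Complex.cosh_zero]
    constructor
    · rw [hb1]; ring
    · rw [hddef]; ring
  have huniq : Set.EqOn f g (Set.Icc (-a) a) :=
    ODE_solution_unique_of_mem_Icc_right (s := fun _ => (Set.univ : Set (ℂ × ℂ))) (fun t _ => (hVlip t).lipschitzOnWith)
      hfc hfd (fun _ _ => trivial) hgc hgd (fun _ _ => trivial) hinit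
  -- evaluate at a
  have hψφ : ∀ v ∈ Set.Icc (-a) a, ψ v = φ v := by
    intro v hv
    have := huniq hv
    exact congrArg Prod.fst this
  have haIcc : a ∈ Set.Icc (-a) a := ⟨by linarith, le_refl a⟩
  have hsinh : Complex.sinh (μ * ((a : ℂ) + (a : ℂ))) ≠ 0 := by
    intro h
    have hsin : Complex.sin (μ * ((a : ℂ) + (a : ℂ)) * Complex.I) = 0 := by
      rw [Complex.sin_mul_I, h, zero_mul]
    rw [Complex.sin_eq_zero_iff] at hsin
    obtain ⟨n, hn⟩ := hsin
    -- μ * 2a * I = n π, so μ = -(nπ/(2a)) I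
    have h2a : ((a : ℂ) + (a : ℂ)) ≠ 0 := by
      have he : ((a : ℂ) + (a : ℂ)) = ((2 * a : ℝ) : ℂ) := by push_cast; ring
      rw [he]
      exact Complex.ofReal_ne_zero.mpr (by linarith)
    have hden : ((a:ℂ) + (a:ℂ)) * Complex.I ≠ 0 := mul_ne_zero h2a Complex.I_ne_zero
    have hμ : μ = (n : ℂ) * (Real.pi : ℂ) / (((a:ℂ) + (a:ℂ)) * Complex.I) := by
      rw [eq_div_iff hden]
      linear_combination hn
    have haa : (a + a : ℝ) ≠ 0 := by linarith
    have hμsq : μ ^ 2 = ((-(((n:ℝ) * Real.pi) ^ 2 / (a + a) ^ 2) : ℝ) : ℂ) := by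
      have h2 : (((a:ℂ) + (a:ℂ)) * Complex.I) ^ 2 = -(((a:ℂ) + (a:ℂ)) ^ 2) := by
        rw [mul_pow, Complex.I_sq]; ring
      rw [hμ, div_pow, h2, div_neg]
      push_cast
      ring
    have hμ2im : (μ ^ 2).im = 0 := by rw [hμsq]; exact Complex.ofReal_im _
    rw [hμ2] at hμ2im
    exact hkim0 hμ2im
  have hd0 : d = 0 := by
    have h := hψφ a haIcc
    rw [hb2, hφdef] at h
    simp only at h
    have := h.symm
    rcases mul_eq_zero.mp this with h' | h'
    · rcases div_eq_zero_iff.mp h' with h'' | h''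
      · exact h''
      · exact absurd h'' hμ0
    · exact absurd h' hsinh
  intro v hv
  rw [hψφ v hv, hφdef]
  simp only
  rw [hd0]
  ring
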